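/- If n = 2^i·(2k+1) with i ≥ 3 and k ≥ 0, then (n-1)!! ≡ (2k+1)^(2^(i-2)) (mod n), where (n-1)!! is the product of all odd numbers from 1 to n-1. -/

import Mathlib

open Finset

lemma oddprod (N : ℕ) : Nat.doubleFactorial (2 * N + 1) = ∏ j ∈ range (N + 1), (2 * j + 1) := by
  rw [Nat.doubleFactorial_eq_prod_odd, Finset.prod_range_succ']
  simp

-- squaring step
lemma sqstep (a c : ℕ) (hc : 1 ≤ c) (h : a ≡ 1 [MOD 2 ^ c]) : a ^ 2 ≡ 1 [MOD 2 ^ (c + 1)] := by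
  rw [Nat.modEq_iff_dvd] at h ⊢
  push_cast at h ⊢
  have h2 : (2 : ℤ) ∣ 1 + a := by
    have : (2 : ℤ) ∣ 1 - a := dvd_trans (by exact_mod_cast pow_dvd_pow 2 hc) h
    omega
  have := mul_dvd_mul h h2
  have e : (1 - (a:ℤ)) * (1 + a) = 1 - a ^ 2 := by ring
  rw [e] at this
  rw [pow_succ]
  exact this

lemma oddpow (m : ℕ) (hm : m % 2 = 1) : ∀ i, 3 ≤ i → m ^ 2 ^ (i - 2) ≡ 1 [MOD 2 ^ i]
  | 3, _ => by
    have h8 : m % 8 = 1 ∨ m % 8 = 3 ∨ m % 8 = 5 ∨ m % 8 = 7 := by omega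
    have h2 : m ^ 2 % 8 = 1 := by
      rcases h8 with h | h | h | h <;> rw [Nat.pow_mod, h]
    simpa [Nat.ModEq, Nat.one_mod] using h2
  | (i + 1), h => by
    rcases Nat.lt_or_ge i 3 with h3 | h3
    · have hi2 : i = 2 := by omega
      subst hi2
      have h8 : m % 8 = 1 ∨ m % 8 = 3 ∨ m % 8 = 5 ∨ m % 8 = 7 := by omega
      have h2 : m ^ 2 % 8 = 1 := by
        rcases h8 with h | h | h | h <;> rw [Nat.pow_mod, h]
      simpa [Nat.ModEq, Nat.one_mod] using h2
    · have ih := oddpow m hm i h3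
      have e : 2 ^ (i + 1 - 2) = 2 ^ (i - 2) * 2 := by
        rw [show i + 1 - 2 = (i - 2) + 1 by omega, pow_succ]
      rw [e, pow_mul]
      exact sqstep _ i (by omega) ih

lemma prodone : ∀ i, 3 ≤ i → (∏ j ∈ range (2 ^ (i - 1)), (2 * j + 1)) ≡ 1 [MOD 2 ^ i]
  | 3, _ => by decide
  | (i + 1), h => by
    rcases Nat.lt_or_ge i 3 with h3 | h3
    · have hi2 : i = 2 := by omega
      subst hi2
      decide
    · have ih := prodone i h3
      have hi1 : i - 1 + 1 = i := by omega
      rw [← ZMod.natCast_eq_natCast_iff]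
      set R := ZMod (2 ^ (i + 1))
      have h0 : (2 : R) ^ (i + 1) = 0 := by
        have := ZMod.natCast_self (2 ^ (i + 1))
        push_cast at this
        exact this
      have h1 : (2 : R) * 2 ^ i = 0 := by rw [← pow_succ']; exact h0
      have ha : (2 : R) ^ (i - 1) * 4 = 0 := by
        rw [show (4 : R) = 2 ^ 2 by norm_num, ← pow_add, show i - 1 + 2 = i + 1 by omega, h0]
      have h2i : (2 : R) ^ i * 2 ^ i = 0 := by
        rw [← pow_add, show i + i = (i + 1) + (i - 1) by omega, pow_add, h0, zero_mul]
      have hsplit : 2 ^ (i + 1 - 1) = 2 ^ (i - 1) + 2 ^ (i - 1) := by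
        rw [show i + 1 - 1 = (i - 1) + 1 by omega, pow_succ]
        ring
      have hfac : ∀ j ∈ range (2 ^ (i - 1)),
          ((2 * (2 ^ (i - 1) + j) + 1 : ℕ) : R) = ((2 * j + 1 : ℕ) : R) * (1 + 2 ^ i) := by
        intro j _
        push_cast
        rw [Nat.cast_mul (α := R), Nat.cast_mul (α := R)]
        push_cast
        have hpi : (2 : R) ^ i = 2 ^ (i - 1) * 2 := by
          rw [← pow_succ, hi1]
        rw [hpi]
        linear_combination (-(j : R)) * ha
      have hQ : ((∏ j ∈ range (2 ^ (i - 1)), (2 * j + 1) : ℕ) : R) *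
          ((∏ j ∈ range (2 ^ (i - 1)), (2 * j + 1) : ℕ) : R) = 1 := by
        rw [← Nat.cast_mul (α := R), ← pow_two]
        have := (ZMod.natCast_eq_natCast_iff _ _ _).mpr (sqstep _ i (by omega) ih)
        simpa using this
      have hc : ((1 : R) + 2 ^ i) ^ 2 ^ (i - 1) = 1 := by
        have hc2 : ((1 : R) + 2 ^ i) ^ 2 = 1 := by linear_combination h1 + h2i
        rw [show 2 ^ (i - 1) = 2 * 2 ^ (i - 2) by rw [← pow_succ']; congr 1; omega,
          pow_mul, hc2, one_pow]
      rw [hsplit, Finset.prod_range_add, Nat.cast_mul, Nat.cast_prod, Nat.cast_prod,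
        Finset.prod_congr rfl hfac, Finset.prod_mul_distrib, Finset.prod_const,
        Finset.card_range, hc, mul_one, ← Nat.cast_prod, hQ]
      norm_num

lemma blockL (i : ℕ) (hi : 1 ≤ i) : ∀ m : ℕ,
    ((∏ j ∈ range (2 ^ (i - 1) * m), (2 * j + 1) : ℕ) : ZMod (2 ^ i)) =
      ((∏ j ∈ range (2 ^ (i - 1)), (2 * j + 1) : ℕ) : ZMod (2 ^ i)) ^ m
  | 0 => by simp
  | (m + 1) => by
    set R := ZMod (2 ^ i)
    have h0 : (2 : R) ^ i = 0 := by
      have := ZMod.natCast_self (2 ^ i)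
      push_cast at this
      exact this
    have hpi : (2 : R) * 2 ^ (i - 1) = 0 := by
      rw [← pow_succ', show i - 1 + 1 = i by omega]
      exact h0
    have hfac : ∀ j ∈ range (2 ^ (i - 1)),
        ((2 * (2 ^ (i - 1) * m + j) + 1 : ℕ) : R) = ((2 * j + 1 : ℕ) : R) := by
      intro j _
      push_cast
      rw [Nat.cast_mul (α := R), Nat.cast_mul (α := R)]
      push_cast
      linear_combination (m : R) * hpi
    rw [show 2 ^ (i - 1) * (m + 1) = 2 ^ (i - 1) * m + 2 ^ (i - 1) by ring,
      Finset.prod_range_add, Nat.cast_mul, blockL i hi m, Nat.cast_prod, Nat.cast_prod,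
      Finset.prod_congr rfl hfac, ← pow_succ]

theorem stmt17 (n i k : ℕ) (hi : 3 ≤ i) (hn : n = 2 ^ i * (2 * k + 1)) :
    (Nat.doubleFactorial (n - 1) : ZMod n) = ((2 * k + 1 : ℕ) : ZMod n) ^ (2 ^ (i - 2)) := by
  set m := 2 * k + 1 with hm
  set N := 2 ^ (i - 1) * m with hN
  have h2N : n = 2 * N := by
    have hp : 2 ^ i = 2 * 2 ^ (i - 1) := by
      rw [← pow_succ', show i - 1 + 1 = i by omega]
    rw [hn, hN, hp]
    ring
  have hmN : m ≤ N := Nat.le_mul_of_pos_left m (by positivity)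
  have hN1 : 1 ≤ N := by omega
  have hn1 : n - 1 = 2 * (N - 1) + 1 := by omega
  rw [hn1, oddprod (N - 1), show N - 1 + 1 = N by omega, ← Nat.cast_pow,
    ZMod.natCast_eq_natCast_iff]
  rw [hn]
  have hcop : Nat.Coprime (2 ^ i) m :=
    Nat.Coprime.pow_left i (Nat.coprime_two_left.mpr ⟨k, by ring⟩)
  refine (Nat.modEq_and_modEq_iff_modEq_mul hcop).mp ⟨?_, ?_⟩
  · -- mod 2 ^ i
    rw [← ZMod.natCast_eq_natCast_iff]
    have hb := blockL i (by omega) m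
    have hq : ((∏ j ∈ range (2 ^ (i - 1)), (2 * j + 1) : ℕ) : ZMod (2 ^ i)) = 1 := by
      have := (ZMod.natCast_eq_natCast_iff _ _ _).mpr (prodone i hi)
      simpa using this
    have hp : ((m ^ 2 ^ (i - 2) : ℕ) : ZMod (2 ^ i)) = 1 := by
      have := (ZMod.natCast_eq_natCast_iff _ _ _).mpr (oddpow m (by omega) i hi)
      simpa using this
    rw [← hN] at hb
    rw [hb, hq, hp, one_pow]
  · -- mod m
    have hd1 : m ∣ ∏ j ∈ range N, (2 * j + 1) := by
      have hk : k ∈ range N := Finset.mem_range.mpr (by omega)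
      simpa using Finset.dvd_prod_of_mem (fun j => 2 * j + 1) hk
    have hd2 : m ∣ m ^ 2 ^ (i - 2) := dvd_pow_self m (by positivity)
    exact ((Nat.modEq_zero_iff_dvd).mpr hd1).trans ((Nat.modEq_zero_iff_dvd).mpr hd2).symm
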